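/- Let k ∈ {1,…,n}, suppose λ*(T_k) < 0 and T_k* < T_{k+1} (where T_{n+1} = +∞). Then T_k* equals the infimum of the set {t ∈ ℝ : T_k ≤ t < T_{k+1} and λ*(t) > 0}; that is, the closed-form restart time coincides with the first time after T_k at which the intensity becomes strictly positive. -/
import Mathlib


/-- The underlying intensity function of an exponential Hawkes process:
`λ*(t) = λ0 + Σ_{i=1}^{n} α·exp(−β(t − T_i))·𝟙{T_i ≤ t}`. -/
noncomputable def lamStar (l0 a b : ℝ) (n : ℕ) (T : ℕ → ℝ) (t : ℝ) : ℝ :=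
  l0 + ∑ i ∈ Finset.Icc 1 n, if T i ≤ t then a * Real.exp (-b * (t - T i)) else 0

/-- The restart time `T_k*`: equal to `T_k + β⁻¹·log((λ0 − λ*(T_k))/λ0)` if
`λ*(T_k) < 0`, and to `T_k` otherwise. -/
noncomputable def restart (l0 a b : ℝ) (n : ℕ) (T : ℕ → ℝ) (k : ℕ) : ℝ :=
  if lamStar l0 a b n T (T k) < 0 then
    T k + b⁻¹ * Real.log ((l0 - lamStar l0 a b n T (T k)) / l0)
  else T k

/-- If `λ*(T_k) < 0` and `T_k* < T_{k+1}` (with `T_{n+1} = +∞`), then `T_k*`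
equals the infimum of `{t : T_k ≤ t < T_{k+1}, λ*(t) > 0}`: the closed-form restart
time coincides with the first time after `T_k` at which the intensity becomes
strictly positive. -/
theorem stmt4 (l0 a b : ℝ) (hl0 : 0 < l0) (hb : 0 < b) (n : ℕ) (hn : 1 ≤ n)
    (T : ℕ → ℝ) (hT0 : T 0 = 0) (hT : ∀ i, i < n → T i < T (i + 1))
    (k : ℕ) (hk1 : 1 ≤ k) (hk2 : k ≤ n)
    (hneg : lamStar l0 a b n T (T k) < 0)
    (hlt : k < n → restart l0 a b n T k < T (k + 1)) :
    restart l0 a b n T k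
      = sInf {t : ℝ | T k ≤ t ∧ (k < n → t < T (k + 1)) ∧ 0 < lamStar l0 a b n T t} := by
  -- monotonicity of T on [0, n]
  have hmono : ∀ j, j ≤ n → ∀ i, i ≤ j → T i ≤ T j := by
    intro j hjn
    induction j with
    | zero => intro i hi; exact le_of_eq (congrArg T (Nat.le_zero.mp hi))
    | succ m ih =>
      intro i hi
      rcases Nat.lt_or_ge i (m + 1) with h | h
      · exact le_trans (ih (by omega) i (by omega)) (le_of_lt (hT m (by omega)))
      · have : i = m + 1 := by omega
        subst this; exact le_refl _
  set S : ℝ := ∑ i ∈ Finset.Icc 1 k, a * Real.exp (b * T i) with hSdef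
  -- closed form on the interval
  have hform : ∀ t : ℝ, T k ≤ t → (k < n → t < T (k + 1)) →
      lamStar l0 a b n T t = l0 + S * Real.exp (-b * t) := by
    intro t ht ht2
    unfold lamStar
    congr 1
    rw [hSdef, Finset.sum_mul]
    rw [← Finset.sum_subset (Finset.Icc_subset_Icc_right hk2)]
    · apply Finset.sum_congr rfl
      intro i hi
      have hik : i ≤ k := (Finset.mem_Icc.mp hi).2
      have h1 : T i ≤ t := le_trans (hmono k hk2 i hik) ht
      rw [if_pos h1, mul_assoc, ← Real.exp_add]
      ring_nf
    · intro i hi hni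
      have hik : k < i := by
        have h1 := Finset.mem_Icc.mp hi
        simp only [Finset.mem_Icc] at hni
        omega
      have hin : i ≤ n := (Finset.mem_Icc.mp hi).2
      have hkn : k < n := lt_of_lt_of_le hik hin
      have hTi : T (k + 1) ≤ T i := hmono i hin (k + 1) hik
      have : ¬ T i ≤ t := not_le.mpr (lt_of_lt_of_le (ht2 hkn) hTi)
      rw [if_neg this]
  have hTkval : lamStar l0 a b n T (T k) = l0 + S * Real.exp (-b * T k) :=
    hform (T k) le_rfl (fun h => hT k h)
  have hE : (0:ℝ) < Real.exp (-b * T k) := Real.exp_pos _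
  have hSprod : S * Real.exp (-b * T k) < -l0 := by
    rw [hTkval] at hneg; linarith
  have hSneg : 0 < -S := by
    nlinarith
  set r : ℝ := restart l0 a b n T k with hrdef
  have hr : r = T k + b⁻¹ * Real.log ((l0 - lamStar l0 a b n T (T k)) / l0) := by
    rw [hrdef, restart, if_pos hneg]
  have hbr : b * r = Real.log (-S) - Real.log l0 := by
    rw [hr, hTkval]
    have h1 : l0 - (l0 + S * Real.exp (-b * T k)) = (-S) * Real.exp (-b * T k) := by ring
    rw [h1, Real.log_div (by positivity) (ne_of_gt hl0),
      Real.log_mul (ne_of_gt hSneg) (ne_of_gt hE), Real.log_exp]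
    field_simp
    ring
  have hiff : ∀ t : ℝ, (0 < l0 + S * Real.exp (-b * t)) ↔ r < t := by
    intro t
    have h1 : (0 < l0 + S * Real.exp (-b * t)) ↔ Real.exp (-b * t) * (-S) < l0 := by
      constructor <;> intro h <;> nlinarith
    rw [h1, ← lt_div_iff₀ hSneg, ← Real.lt_log_iff_exp_lt (by positivity),
      Real.log_div (ne_of_gt hl0) (ne_of_gt hSneg)]
    constructor
    · intro h; nlinarith
    · intro h; nlinarith
  have hTkr : T k ≤ r := by
    by_contra h
    push_neg at h
    have := (hiff (T k)).mpr h
    rw [← hTkval] at this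
    linarith
  -- set equality
  by_cases hkn : k < n
  · have hA : {t : ℝ | T k ≤ t ∧ (k < n → t < T (k + 1)) ∧ 0 < lamStar l0 a b n T t}
        = Set.Ioo r (T (k + 1)) := by
      ext t
      simp only [Set.mem_setOf_eq, Set.mem_Ioo]
      constructor
      · rintro ⟨h1, h2, h3⟩
        rw [hform t h1 h2] at h3
        exact ⟨(hiff t).mp h3, h2 hkn⟩
      · rintro ⟨h1, h2⟩
        have hTt : T k ≤ t := le_trans hTkr (le_of_lt h1)
        refine ⟨hTt, fun _ => h2, ?_⟩
        rw [hform t hTt (fun _ => h2)]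
        exact (hiff t).mpr h1
    rw [hA, csInf_Ioo (hlt hkn)]
  · have hA : {t : ℝ | T k ≤ t ∧ (k < n → t < T (k + 1)) ∧ 0 < lamStar l0 a b n T t}
        = Set.Ioi r := by
      ext t
      simp only [Set.mem_setOf_eq, Set.mem_Ioi]
      constructor
      · rintro ⟨h1, h2, h3⟩
        rw [hform t h1 h2] at h3
        exact (hiff t).mp h3
      · intro h1
        have hTt : T k ≤ t := le_trans hTkr (le_of_lt h1)
        refine ⟨hTt, fun h => absurd h hkn, ?_⟩
        rw [hform t hTt (fun h => absurd h hkn)]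
        exact (hiff t).mpr h1
    rw [hA, csInf_Ioi]
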